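/- Let K be a nowhere-vanishing Killing field on an open set U ⊆ ℝ³ and let f, g : U → ℝ be smooth functions with ⟨K, ∇f⟩ = 0 and ⟨K, ∇g⟩ = 0 on U. Then curl(∇⊥f) = (Δ_K f) K, where Δ_K f = div(∇f/|K|²), and curl(gK) = −∇⊥(|K|² g) + φ g K, where φ = ⟨curl K, K⟩/|K|². -/

import Mathlib

noncomputable section

/-- Vectors in ℝ³. -/
abbrev V3 : Type := Fin 3 → ℝ

/-- Euclidean inner product on ℝ³. -/
def dot3 (u v : V3) : ℝ := ∑ i, u i * v i

/-- Cross product on ℝ³. -/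
def cross3 (u v : V3) : V3 :=
  ![u 1 * v 2 - u 2 * v 1, u 2 * v 0 - u 0 * v 2, u 0 * v 1 - u 1 * v 0]

/-- Partial derivative ∂ᵢ of a scalar function. -/
def pd (i : Fin 3) (f : V3 → ℝ) (x : V3) : ℝ := fderiv ℝ f x (Pi.single i 1)

/-- Gradient of a scalar function. -/
def grad3 (f : V3 → ℝ) (x : V3) : V3 := fun i => pd i f x

/-- Divergence of a vector field. -/
def div3 (X : V3 → V3) (x : V3) : ℝ := ∑ i, fderiv ℝ X x (Pi.single i 1) i

/-- Curl of a vector field. -/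
def curl3 (X : V3 → V3) (x : V3) : V3 :=
  ![pd 1 (fun y => X y 2) x - pd 2 (fun y => X y 1) x,
    pd 2 (fun y => X y 0) x - pd 0 (fun y => X y 2) x,
    pd 0 (fun y => X y 1) x - pd 1 (fun y => X y 0) x]

/-- Lie bracket of vector fields: [X,Y](x) = DY(x)X(x) − DX(x)Y(x). -/
def bracket3 (X Y : V3 → V3) (x : V3) : V3 := fderiv ℝ Y x (X x) - fderiv ℝ X x (Y x)

/-- `K` is a Killing field of the Euclidean metric on `U`: `DK(x)` is antisymmetric on `U`. -/
def IsKillingOn (K : V3 → V3) (U : Set V3) : Prop :=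
  ∀ x ∈ U, ∀ v w : V3, dot3 (fderiv ℝ K x v) w + dot3 v (fderiv ℝ K x w) = 0

/-- Skew gradient ∇⊥h = (K × ∇h)/|K|². -/
def skewGrad (K : V3 → V3) (h : V3 → ℝ) (x : V3) : V3 :=
  (dot3 (K x) (K x))⁻¹ • cross3 (K x) (grad3 h x)

/-- Poisson bracket {f,g} = ⟨∇⊥f, ∇g⟩. -/
def pbracket (K : V3 → V3) (f g : V3 → ℝ) (x : V3) : ℝ :=
  dot3 (skewGrad K f x) (grad3 g x)

/-- The K-Laplacian Δ_K f = div(∇f/|K|²). -/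
def lapK (K : V3 → V3) (f : V3 → ℝ) (x : V3) : ℝ :=
  div3 (fun y => (dot3 (K y) (K y))⁻¹ • grad3 f y) x

/-- φ = ⟨curl K, K⟩/|K|². -/
def phiK (K : V3 → V3) (x : V3) : ℝ := dot3 (curl3 K x) (K x) / dot3 (K x) (K x)

/-! ### Auxiliary partial-derivative calculus -/

section PDCalc

variable {F G : V3 → ℝ} {x : V3} {i : Fin 3}

lemma pd_congr (h : F =ᶠ[nhds x] G) : pd i F x = pd i G x := by
  rw [pd, pd, h.fderiv_eq]

lemma pd_const (c : ℝ) : pd i (fun _ => c) x = 0 := by simp [pd]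

lemma pd_add (hF : DifferentiableAt ℝ F x) (hG : DifferentiableAt ℝ G x) :
    pd i (fun y => F y + G y) x = pd i F x + pd i G x := by
  simp [pd, fderiv_fun_add hF hG]

lemma pd_sub (hF : DifferentiableAt ℝ F x) (hG : DifferentiableAt ℝ G x) :
    pd i (fun y => F y - G y) x = pd i F x - pd i G x := by
  simp [pd, fderiv_fun_sub hF hG]

lemma pd_mul (hF : DifferentiableAt ℝ F x) (hG : DifferentiableAt ℝ G x) :
    pd i (fun y => F y * G y) x = pd i F x * G x + F x * pd i G x := by
  rw [pd, fderiv_fun_mul hF hG]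
  simp [pd]; ring

lemma pd_inv (hF : DifferentiableAt ℝ F x) (h0 : F x ≠ 0) :
    pd i (fun y => (F y)⁻¹) x = -(pd i F x) / (F x)^2 := by
  have : (fun y => (F y)⁻¹) = Inv.inv ∘ F := rfl
  rw [pd, this, fderiv_comp x (differentiableAt_inv h0) hF, fderiv_inv' h0]
  simp only [ContinuousLinearMap.coe_comp', Function.comp_apply,
    ContinuousLinearMap.neg_apply, ContinuousLinearMap.mulLeftRight_apply, pd]
  field_simp

end PDCalc


section MoreCalc

variable {x : V3}

lemma dot3_single (v : V3) (j : Fin 3) : dot3 v (Pi.single j 1) = v j := by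
  simp [dot3, Pi.single_apply, Finset.sum_ite_eq]

lemma dot3_single_left (v : V3) (j : Fin 3) : dot3 (Pi.single j 1) v = v j := by
  simp [dot3, Pi.single_apply, Finset.sum_ite_eq]

lemma fderiv_comp_proj {X : V3 → V3} (hX : DifferentiableAt ℝ X x) (j : Fin 3) (v : V3) :
    fderiv ℝ X x v j = fderiv ℝ (fun y => X y j) x v := by
  have e : (fun y => X y j)
      = (ContinuousLinearMap.proj (R := ℝ) (φ := fun _ : Fin 3 => ℝ) j) ∘ X := rfl
  rw [e, fderiv_comp x (ContinuousLinearMap.proj j).differentiableAt hX]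
  simp

end MoreCalc

/-- for a nowhere-vanishing Killing field K on an open set U and smooth
functions f, g with K(f) = K(g) = 0, one has curl(∇⊥f) = (Δ_K f) K with
Δ_K f = div(∇f/|K|²), and curl(gK) = −∇⊥(|K|² g) + φ g K with φ = ⟨curl K, K⟩/|K|². -/
theorem curl_skewGrad_and_curl_gK (U : Set V3) (hU : IsOpen U)
    (K : V3 → V3) (hKsmooth : ContDiffOn ℝ (⊤ : ℕ∞) K U)
    (hKill : IsKillingOn K U) (hKne : ∀ x ∈ U, K x ≠ 0)
    (f g : V3 → ℝ)
    (hf : ContDiffOn ℝ (⊤ : ℕ∞) f U) (hg : ContDiffOn ℝ (⊤ : ℕ∞) g U)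
    (hKf : ∀ x ∈ U, dot3 (K x) (grad3 f x) = 0)
    (hKg : ∀ x ∈ U, dot3 (K x) (grad3 g x) = 0) :
    ∀ x ∈ U,
      curl3 (skewGrad K f) x = lapK K f x • K x ∧
      curl3 (fun y => g y • K y) x
        = - skewGrad K (fun y => dot3 (K y) (K y) * g y) x + (phiK K x * g x) • K x := by
  intro x hx
  have hUx : U ∈ nhds x := hU.mem_nhds hx
  -- differentiability of components of K at x
  have hKC : ∀ j, ContDiffOn ℝ (⊤ : ℕ∞) (fun y => K y j) U := fun j =>
    (ContinuousLinearMap.proj (R := ℝ) (φ := fun _ : Fin 3 => ℝ) j).contDiff.comp_contDiffOn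
      hKsmooth
  have dK : ∀ j, DifferentiableAt ℝ (fun y => K y j) x := fun j =>
    ((hKC j).contDiffAt hUx).differentiableAt (by simp)
  have dKv : DifferentiableAt ℝ K x := (hKsmooth.contDiffAt hUx).differentiableAt (by simp)
  have df : DifferentiableAt ℝ f x := (hf.contDiffAt hUx).differentiableAt (by simp)
  have dg : DifferentiableAt ℝ g x := (hg.contDiffAt hUx).differentiableAt (by simp)
  -- first derivative of f as a smooth map
  have hfd : ContDiffOn ℝ (⊤ : ℕ∞) (fderiv ℝ f) U := by
    exact hf.fderiv_of_isOpen hU (by simp)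
  have hPfU : ∀ j : Fin 3, ContDiffOn ℝ (⊤ : ℕ∞) (fun y => pd j f y) U := fun j => by
    exact hfd.clm_apply contDiffOn_const
  have dPf : ∀ j : Fin 3, DifferentiableAt ℝ (fun y => pd j f y) x := fun j =>
    ((hPfU j).contDiffAt hUx).differentiableAt (by simp)
  have dfd : DifferentiableAt ℝ (fderiv ℝ f) x :=
    (hfd.contDiffAt hUx).differentiableAt (by simp)

  -- Killing antisymmetry
  have hA : ∀ i j : Fin 3, pd i (fun y => K y j) x + pd j (fun y => K y i) x = 0 := by
    intro i j
    have h := hKill x hx (Pi.single i 1) (Pi.single j 1)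
    rw [dot3_single, dot3_single_left, fderiv_comp_proj dKv, fderiv_comp_proj dKv] at h
    exact h
  -- symmetry of second derivatives of f
  have hB : ∀ i j : Fin 3, pd i (fun y => pd j f y) x = pd j (fun y => pd i f y) x := by
    intro i j
    have heven : ∀ᶠ y in nhds x, HasFDerivAt f (fderiv ℝ f y) y := by
      filter_upwards [hUx] with y hy
      exact ((hf.contDiffAt (hU.mem_nhds hy)).differentiableAt
        (by simp)).hasFDerivAt
    have hsymm := second_derivative_symmetric_of_eventually heven dfd.hasFDerivAt
      (Pi.single i 1) (Pi.single j 1)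
    have key : ∀ a b : Fin 3, pd a (fun y => pd b f y) x
        = fderiv ℝ (fderiv ℝ f) x (Pi.single a 1) (Pi.single b 1) := by
      intro a b
      have e : (fun y => pd b f y) = (fun y => (fderiv ℝ f y) (Pi.single b 1)) := rfl
      rw [pd, e, fderiv_clm_apply dfd (differentiableAt_const _)]
      simp
    rw [key, key, hsymm]
  -- K ⬝ ∇f = 0 on U
  have hD : K x 0 * pd 0 f x + K x 1 * pd 1 f x + K x 2 * pd 2 f x = 0 := by
    have := hKf x hx
    simpa [dot3, grad3, Fin.sum_univ_three] using this
  -- differentiated constraint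
  have hC : ∀ i : Fin 3,
      pd i (fun y => K y 0) x * pd 0 f x + K x 0 * pd i (fun y => pd 0 f y) x
      + (pd i (fun y => K y 1) x * pd 1 f x + K x 1 * pd i (fun y => pd 1 f y) x)
      + (pd i (fun y => K y 2) x * pd 2 f x + K x 2 * pd i (fun y => pd 2 f y) x) = 0 := by
    intro i
    have hz : (fun y => K y 0 * pd 0 f y + K y 1 * pd 1 f y + K y 2 * pd 2 f y)
        =ᶠ[nhds x] (fun _ => (0:ℝ)) := by
      filter_upwards [hUx] with y hy
      simpa [dot3, grad3, Fin.sum_univ_three] using hKf y hy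
    have h0 : pd i (fun y => K y 0 * pd 0 f y + K y 1 * pd 1 f y + K y 2 * pd 2 f y) x = 0 := by
      rw [pd_congr hz]; exact pd_const 0
    have e1 := pd_add (i := i) (((dK 0).fun_mul (dPf 0)).fun_add ((dK 1).fun_mul (dPf 1)))
      ((dK 2).fun_mul (dPf 2))
    have e2 := pd_add (i := i) ((dK 0).fun_mul (dPf 0)) ((dK 1).fun_mul (dPf 1))
    have e3 := pd_mul (i := i) (dK 0) (dPf 0)
    have e4 := pd_mul (i := i) (dK 1) (dPf 1)
    have e5 := pd_mul (i := i) (dK 2) (dPf 2)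
    linarith [h0, e1, e2, e3, e4, e5]
  -- nonvanishing of |K|²
  have hq0 : dot3 (K x) (K x) ≠ 0 := by
    simp only [dot3, Fin.sum_univ_three]
    intro hcon
    apply hKne x hx
    have h0 : K x 0 = 0 := by
      nlinarith [mul_self_nonneg (K x 0), mul_self_nonneg (K x 1), mul_self_nonneg (K x 2)]
    have h1 : K x 1 = 0 := by
      nlinarith [mul_self_nonneg (K x 0), mul_self_nonneg (K x 1), mul_self_nonneg (K x 2)]
    have h2 : K x 2 = 0 := by
      nlinarith [mul_self_nonneg (K x 0), mul_self_nonneg (K x 1), mul_self_nonneg (K x 2)]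
    funext j
    fin_cases j
    · simpa using h0
    · simpa using h1
    · simpa using h2
  have dq : DifferentiableAt ℝ (fun y => dot3 (K y) (K y)) x := by
    have e : (fun y => dot3 (K y) (K y))
        = (fun y => K y 0 * K y 0 + K y 1 * K y 1 + K y 2 * K y 2) := by
      funext y; simp [dot3, Fin.sum_univ_three]
    rw [e]
    exact (((dK 0).mul (dK 0)).add ((dK 1).mul (dK 1))).add ((dK 2).mul (dK 2))
  have dw : DifferentiableAt ℝ (fun y => (dot3 (K y) (K y))⁻¹) x := dq.inv hq0
  have hw : (dot3 (K x) (K x))⁻¹ * (K x 0 * K x 0 + K x 1 * K x 1 + K x 2 * K x 2) = 1 := by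
    have e : dot3 (K x) (K x) = K x 0 * K x 0 + K x 1 * K x 1 + K x 2 * K x 2 := by
      simp [dot3, Fin.sum_univ_three]
    rw [← e]; exact inv_mul_cancel₀ hq0
  -- derivative of |K|²
  have hqd : ∀ i : Fin 3, pd i (fun y => dot3 (K y) (K y)) x
      = 2*(K x 0 * pd i (fun y => K y 0) x + K x 1 * pd i (fun y => K y 1) x
          + K x 2 * pd i (fun y => K y 2) x) := by
    intro i
    have e : (fun y => dot3 (K y) (K y))
        = (fun y => K y 0 * K y 0 + K y 1 * K y 1 + K y 2 * K y 2) := by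
      funext y; simp [dot3, Fin.sum_univ_three]
    rw [e]
    have t1 := pd_add (i := i) (((dK 0).fun_mul (dK 0)).fun_add ((dK 1).fun_mul (dK 1)))
      ((dK 2).fun_mul (dK 2))
    have t2 := pd_add (i := i) ((dK 0).fun_mul (dK 0)) ((dK 1).fun_mul (dK 1))
    have t3 := pd_mul (i := i) (dK 0) (dK 0)
    have t4 := pd_mul (i := i) (dK 1) (dK 1)
    have t5 := pd_mul (i := i) (dK 2) (dK 2)
    linarith [t1, t2, t3, t4, t5]
  have hwd : ∀ i : Fin 3, pd i (fun y => (dot3 (K y) (K y))⁻¹) x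
      = -(pd i (fun y => dot3 (K y) (K y)) x) / (dot3 (K x) (K x))^2 :=
    fun i => pd_inv dq hq0
  -- derivative of the components of the skew gradient
  have hskew : ∀ i j1 j2 : Fin 3,
      pd i (fun y => (dot3 (K y) (K y))⁻¹ * (K y j1 * pd j2 f y - K y j2 * pd j1 f y)) x
      = -((dot3 (K x) (K x))⁻¹ * (dot3 (K x) (K x))⁻¹
            * (2*(K x 0 * pd i (fun y => K y 0) x + K x 1 * pd i (fun y => K y 1) x
                + K x 2 * pd i (fun y => K y 2) x))
            * (K x j1 * pd j2 f x - K x j2 * pd j1 f x))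
        + (dot3 (K x) (K x))⁻¹
            * (pd i (fun y => K y j1) x * pd j2 f x + K x j1 * pd i (fun y => pd j2 f y) x
              - pd i (fun y => K y j2) x * pd j1 f x - K x j2 * pd i (fun y => pd j1 f y) x) := by
    intro i j1 j2
    rw [pd_mul (i := i) dw (((dK j1).fun_mul (dPf j2)).fun_sub ((dK j2).fun_mul (dPf j1))),
        pd_sub (i := i) ((dK j1).fun_mul (dPf j2)) ((dK j2).fun_mul (dPf j1)),
        pd_mul (i := i) (dK j1) (dPf j2), pd_mul (i := i) (dK j2) (dPf j1),
        hwd i, hqd i]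
    ring
  have hlapP : ∀ i j : Fin 3, pd i (fun y => (dot3 (K y) (K y))⁻¹ * pd j f y) x
      = -((dot3 (K x) (K x))⁻¹ * (dot3 (K x) (K x))⁻¹
            * (2*(K x 0 * pd i (fun y => K y 0) x + K x 1 * pd i (fun y => K y 1) x
                + K x 2 * pd i (fun y => K y 2) x)) * pd j f x)
        + (dot3 (K x) (K x))⁻¹ * pd i (fun y => pd j f y) x := by
    intro i j
    rw [pd_mul (i := i) dw (dPf j), hwd i, hqd i]
    ring
  have hXd : DifferentiableAt ℝ (fun y => (dot3 (K y) (K y))⁻¹ • grad3 f y) x := by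
    apply differentiableAt_pi.mpr
    intro j
    exact dw.mul (dPf j)
  have hlap : lapK K f x = pd 0 (fun y => (dot3 (K y) (K y))⁻¹ * pd 0 f y) x
      + pd 1 (fun y => (dot3 (K y) (K y))⁻¹ * pd 1 f y) x
      + pd 2 (fun y => (dot3 (K y) (K y))⁻¹ * pd 2 f y) x := by
    rw [lapK, div3, Fin.sum_univ_three, fderiv_comp_proj hXd, fderiv_comp_proj hXd,
      fderiv_comp_proj hXd]
    rfl
  -- rewrite of skew gradient components
  have eS0 : (fun y => skewGrad K f y 0)
      = (fun y => (dot3 (K y) (K y))⁻¹ * (K y 1 * pd 2 f y - K y 2 * pd 1 f y)) := by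
    funext y; simp [skewGrad, cross3, grad3]
  have eS1 : (fun y => skewGrad K f y 1)
      = (fun y => (dot3 (K y) (K y))⁻¹ * (K y 2 * pd 0 f y - K y 0 * pd 2 f y)) := by
    funext y; simp [skewGrad, cross3, grad3]
  have eS2 : (fun y => skewGrad K f y 2)
      = (fun y => (dot3 (K y) (K y))⁻¹ * (K y 0 * pd 1 f y - K y 1 * pd 0 f y)) := by
    funext y; simp [skewGrad, cross3, grad3]
  -- statement 2 ingredients
  have hgK : ∀ i j : Fin 3, pd i (fun y => g y * K y j) x
      = pd i g x * K x j + g x * pd i (fun y => K y j) x := fun i j => pd_mul dg (dK j)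
  have hs : ∀ j : Fin 3, pd j (fun y => dot3 (K y) (K y) * g y) x
      = 2*(K x 0 * pd j (fun y => K y 0) x + K x 1 * pd j (fun y => K y 1) x
          + K x 2 * pd j (fun y => K y 2) x) * g x
        + (K x 0 * K x 0 + K x 1 * K x 1 + K x 2 * K x 2) * pd j g x := by
    intro j
    have t := pd_mul (i := j) dq dg
    have e : dot3 (K x) (K x) = K x 0 * K x 0 + K x 1 * K x 1 + K x 2 * K x 2 := by
      simp [dot3, Fin.sum_univ_three]
    rw [t, hqd j, e]
  have hphi : phiK K x
      = ((pd 1 (fun y => K y 2) x - pd 2 (fun y => K y 1) x) * K x 0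
        + ((pd 2 (fun y => K y 0) x - pd 0 (fun y => K y 2) x) * K x 1
        + (pd 0 (fun y => K y 1) x - pd 1 (fun y => K y 0) x) * K x 2))
        * (dot3 (K x) (K x))⁻¹ := by
    rw [phiK, div_eq_mul_inv]
    congr 1
    simp [dot3, curl3, Fin.sum_univ_three]
    ring
  constructor
  · funext m
    fin_cases m
    · show pd 1 (fun y => skewGrad K f y 2) x - pd 2 (fun y => skewGrad K f y 1) x
        = lapK K f x * K x 0
      rw [eS2, eS1, hskew 1 0 1, hskew 2 2 0, hlap, hlapP 0 0, hlapP 1 1, hlapP 2 2]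
      linear_combination (3/2) * ((dot3 (K x) (K x))⁻¹) * ((dot3 (K x) (K x))⁻¹) * (K x 0) * (K x 0) * (pd 0 f x) * (hA 0 0) + (1/2) * ((dot3 (K x) (K x))⁻¹) * ((dot3 (K x) (K x))⁻¹) * (K x 1) * (K x 1) * (pd 0 f x) * (hA 0 0) + (1/2) * ((dot3 (K x) (K x))⁻¹) * ((dot3 (K x) (K x))⁻¹) * (K x 2) * (K x 2) * (pd 0 f x) * (hA 0 0) + (1) * ((dot3 (K x) (K x))⁻¹) * ((dot3 (K x) (K x))⁻¹) * (K x 0) * (K x 0) * (pd 1 f x) * (hA 0 1) + (2) * ((dot3 (K x) (K x))⁻¹) * ((dot3 (K x) (K x))⁻¹) * (K x 0) * (K x 1) * (pd 0 f x) * (hA 0 1) + (1) * ((dot3 (K x) (K x))⁻¹) * ((dot3 (K x) (K x))⁻¹) * (K x 1) * (K x 1) * (pd 1 f x) * (hA 0 1) + (1) * ((dot3 (K x) (K x))⁻¹) * ((dot3 (K x) (K x))⁻¹) * (K x 2) * (K x 2) * (pd 1 f x) * (hA 0 1) + (1) * ((dot3 (K x) (K x))⁻¹) * ((dot3 (K x)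 (K x))⁻¹) * (K x 0) * (K x 0) * (pd 2 f x) * (hA 0 2) + (2) * ((dot3 (K x) (K x))⁻¹) * ((dot3 (K x) (K x))⁻¹) * (K x 0) * (K x 2) * (pd 0 f x) * (hA 0 2) + (1) * ((dot3 (K x) (K x))⁻¹) * ((dot3 (K x) (K x))⁻¹) * (K x 1) * (K x 1) * (pd 2 f x) * (hA 0 2) + (1) * ((dot3 (K x) (K x))⁻¹) * ((dot3 (K x) (K x))⁻¹) * (K x 2) * (K x 2) * (pd 2 f x) * (hA 0 2) + (-1/2) * ((dot3 (K x) (K x))⁻¹) * ((dot3 (K x) (K x))⁻¹) * (K x 0) * (K x 0) * (pd 0 f x) * (hA 1 1) + (1/2) * ((dot3 (K x) (K x))⁻¹) * ((dot3 (K x) (K x))⁻¹) * (K x 1) * (K x 1) * (pd 0 f x) * (hA 1 1) + (-1/2) * ((dot3 (K x) (K x))⁻¹) * ((dot3 (K x) (K x))⁻¹) * (K x 2) * (K x 2) * (pd 0 f x) * (hA 1 1) + (2) * ((dot3 (K x) (K x))⁻¹) * ((dot3 (K x) (K x))⁻¹) * (K x 1) * (K x 2) * (pd 0 f x) * (hA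 1 2) + (-1/2) * ((dot3 (K x) (K x))⁻¹) * ((dot3 (K x) (K x))⁻¹) * (K x 0) * (K x 0) * (pd 0 f x) * (hA 2 2) + (-1/2) * ((dot3 (K x) (K x))⁻¹) * ((dot3 (K x) (K x))⁻¹) * (K x 1) * (K x 1) * (pd 0 f x) * (hA 2 2) + (1/2) * ((dot3 (K x) (K x))⁻¹) * ((dot3 (K x) (K x))⁻¹) * (K x 2) * (K x 2) * (pd 0 f x) * (hA 2 2) + (1) * ((dot3 (K x) (K x))⁻¹) * ((dot3 (K x) (K x))⁻¹) * (K x 0) * (K x 0) * (K x 1) * (hB 0 1) + (1) * ((dot3 (K x) (K x))⁻¹) * ((dot3 (K x) (K x))⁻¹) * (K x 1) * (K x 1) * (K x 1) * (hB 0 1) + (1) * ((dot3 (K x) (K x))⁻¹) * ((dot3 (K x) (K x))⁻¹) * (K x 1) * (K x 2) * (K x 2) * (hB 0 1) + (1) * ((dot3 (K x) (K x))⁻¹) * ((dot3 (K x) (K x))⁻¹) * (K x 0) * (K x 0) * (K x 2) * (hB 0 2) + (1) * ((dot3 (K x) (K x))⁻¹) * ((dot3 (K x) (K x))⁻¹)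 * (K x 1) * (K x 1) * (K x 2) * (hB 0 2) + (1) * ((dot3 (K x) (K x))⁻¹) * ((dot3 (K x) (K x))⁻¹) * (K x 2) * (K x 2) * (K x 2) * (hB 0 2) + (-1) * ((dot3 (K x) (K x))⁻¹) * ((dot3 (K x) (K x))⁻¹) * (K x 0) * (K x 0) * (hC 0) + (-1) * ((dot3 (K x) (K x))⁻¹) * ((dot3 (K x) (K x))⁻¹) * (K x 1) * (K x 1) * (hC 0) + (-1) * ((dot3 (K x) (K x))⁻¹) * ((dot3 (K x) (K x))⁻¹) * (K x 2) * (K x 2) * (hC 0) + ((-1) * (pd 1 (fun y => K y 0) x) * (pd 1 f x) * ((dot3 (K x) (K x))⁻¹) + 1 * (pd 1 (fun y => K y 1) x) * (pd 0 f x) * ((dot3 (K x) (K x))⁻¹) + (-1) * (pd 2 (fun y => K y 0) x) * (pd 2 f x) * ((dot3 (K x) (K x))⁻¹) + 1 * (pd 2 (fun y => K y 2) x) * (pd 0 f x) * ((dot3 (K x) (K x))⁻¹) + 1 * (pd 0 (fun y => pd 0 f y) x) * (K x 0) * ((dot3 (K x) (K x))⁻¹) + 1 * (pd 1 (fun y =>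 pd 0 f y) x) * (K x 1) * ((dot3 (K x) (K x))⁻¹) + 1 * (pd 2 (fun y => pd 0 f y) x) * (K x 2) * ((dot3 (K x) (K x))⁻¹)) * hw
    · show pd 2 (fun y => skewGrad K f y 0) x - pd 0 (fun y => skewGrad K f y 2) x
        = lapK K f x * K x 1
      rw [eS0, eS2, hskew 2 1 2, hskew 0 0 1, hlap, hlapP 0 0, hlapP 1 1, hlapP 2 2]
      linear_combination (1/2) * ((dot3 (K x) (K x))⁻¹) * ((dot3 (K x) (K x))⁻¹) * (K x 0) * (K x 0) * (pd 1 f x) * (hA 0 0) + (-1/2) * ((dot3 (K x) (K x))⁻¹) * ((dot3 (K x) (K x))⁻¹) * (K x 1) * (K x 1) * (pd 1 f x) * (hA 0 0) + (-1/2) * ((dot3 (K x) (K x))⁻¹) * ((dot3 (K x) (K x))⁻¹) * (K x 2) * (K x 2) * (pd 1 f x) * (hA 0 0) + (1) * ((dot3 (K x) (K x))⁻¹) * ((dot3 (K x) (K x))⁻¹) * (K x 0) * (K x 0) * (pd 0 f x) * (hA 0 1) + (2) * ((dot3 (K x) (K x))⁻¹) * ((dot3 (K x) (K x))⁻¹)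 * (K x 0) * (K x 1) * (pd 1 f x) * (hA 0 1) + (1) * ((dot3 (K x) (K x))⁻¹) * ((dot3 (K x) (K x))⁻¹) * (K x 1) * (K x 1) * (pd 0 f x) * (hA 0 1) + (1) * ((dot3 (K x) (K x))⁻¹) * ((dot3 (K x) (K x))⁻¹) * (K x 2) * (K x 2) * (pd 0 f x) * (hA 0 1) + (2) * ((dot3 (K x) (K x))⁻¹) * ((dot3 (K x) (K x))⁻¹) * (K x 0) * (K x 2) * (pd 1 f x) * (hA 0 2) + (1/2) * ((dot3 (K x) (K x))⁻¹) * ((dot3 (K x) (K x))⁻¹) * (K x 0) * (K x 0) * (pd 1 f x) * (hA 1 1) + (3/2) * ((dot3 (K x) (K x))⁻¹) * ((dot3 (K x) (K x))⁻¹) * (K x 1) * (K x 1) * (pd 1 f x) * (hA 1 1) + (1/2) * ((dot3 (K x) (K x))⁻¹) * ((dot3 (K x) (K x))⁻¹) * (K x 2) * (K x 2) * (pd 1 f x) * (hA 1 1) + (1) * ((dot3 (K x) (K x))⁻¹) * ((dot3 (K x) (K x))⁻¹) * (K x 0) * (K x 0) * (pd 2 f x) * (hA 1 2) + (1) * ((dot3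 (K x) (K x))⁻¹) * ((dot3 (K x) (K x))⁻¹) * (K x 1) * (K x 1) * (pd 2 f x) * (hA 1 2) + (2) * ((dot3 (K x) (K x))⁻¹) * ((dot3 (K x) (K x))⁻¹) * (K x 1) * (K x 2) * (pd 1 f x) * (hA 1 2) + (1) * ((dot3 (K x) (K x))⁻¹) * ((dot3 (K x) (K x))⁻¹) * (K x 2) * (K x 2) * (pd 2 f x) * (hA 1 2) + (-1/2) * ((dot3 (K x) (K x))⁻¹) * ((dot3 (K x) (K x))⁻¹) * (K x 0) * (K x 0) * (pd 1 f x) * (hA 2 2) + (-1/2) * ((dot3 (K x) (K x))⁻¹) * ((dot3 (K x) (K x))⁻¹) * (K x 1) * (K x 1) * (pd 1 f x) * (hA 2 2) + (1/2) * ((dot3 (K x) (K x))⁻¹) * ((dot3 (K x) (K x))⁻¹) * (K x 2) * (K x 2) * (pd 1 f x) * (hA 2 2) + (-1) * ((dot3 (K x) (K x))⁻¹) * ((dot3 (K x) (K x))⁻¹) * (K x 0) * (K x 0) * (K x 0) * (hB 0 1) + (-1) * ((dot3 (K x) (K x))⁻¹) * ((dot3 (K x) (K x))⁻¹) * (K x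 0) * (K x 1) * (K x 1) * (hB 0 1) + (-1) * ((dot3 (K x) (K x))⁻¹) * ((dot3 (K x) (K x))⁻¹) * (K x 0) * (K x 2) * (K x 2) * (hB 0 1) + (1) * ((dot3 (K x) (K x))⁻¹) * ((dot3 (K x) (K x))⁻¹) * (K x 0) * (K x 0) * (K x 2) * (hB 1 2) + (1) * ((dot3 (K x) (K x))⁻¹) * ((dot3 (K x) (K x))⁻¹) * (K x 1) * (K x 1) * (K x 2) * (hB 1 2) + (1) * ((dot3 (K x) (K x))⁻¹) * ((dot3 (K x) (K x))⁻¹) * (K x 2) * (K x 2) * (K x 2) * (hB 1 2) + (-1) * ((dot3 (K x) (K x))⁻¹) * ((dot3 (K x) (K x))⁻¹) * (K x 0) * (K x 0) * (hC 1) + (-1) * ((dot3 (K x) (K x))⁻¹) * ((dot3 (K x) (K x))⁻¹) * (K x 1) * (K x 1) * (hC 1) + (-1) * ((dot3 (K x) (K x))⁻¹) * ((dot3 (K x) (K x))⁻¹) * (K x 2) * (K x 2) * (hC 1) + (1 * (pd 0 (fun y => K y 0) x) * (pd 1 f x) * ((dot3 (K x) (K x))⁻¹) + (-1) * (pd 0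 (fun y => K y 1) x) * (pd 0 f x) * ((dot3 (K x) (K x))⁻¹) + (-1) * (pd 2 (fun y => K y 1) x) * (pd 2 f x) * ((dot3 (K x) (K x))⁻¹) + 1 * (pd 2 (fun y => K y 2) x) * (pd 1 f x) * ((dot3 (K x) (K x))⁻¹) + 1 * (pd 0 (fun y => pd 1 f y) x) * (K x 0) * ((dot3 (K x) (K x))⁻¹) + 1 * (pd 1 (fun y => pd 1 f y) x) * (K x 1) * ((dot3 (K x) (K x))⁻¹) + 1 * (pd 2 (fun y => pd 1 f y) x) * (K x 2) * ((dot3 (K x) (K x))⁻¹)) * hw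
    · show pd 0 (fun y => skewGrad K f y 1) x - pd 1 (fun y => skewGrad K f y 0) x
        = lapK K f x * K x 2
      rw [eS1, eS0, hskew 0 2 0, hskew 1 1 2, hlap, hlapP 0 0, hlapP 1 1, hlapP 2 2]
      linear_combination (1/2) * ((dot3 (K x) (K x))⁻¹) * ((dot3 (K x) (K x))⁻¹) * (K x 0) * (K x 0) * (pd 2 f x) * (hA 0 0) + (-1/2) * ((dot3 (K x) (K x))⁻¹) * ((dot3 (K x) (K x))⁻¹) * (K x 1) * (K x 1) * (pd 2 f x) * (hA 0 0) + (-1/2) * ((dot3 (K x) (K x))⁻¹) * ((dot3 (K x) (K x))⁻¹) * (K x 2) * (K x 2) * (pd 2 f x) * (hA 0 0) + (2) * ((dot3 (K x) (K x))⁻¹) * ((dot3 (K x) (K x))⁻¹) * (K x 0) * (K x 1) * (pd 2 f x) * (hA 0 1) + (1) * ((dot3 (K x) (K x))⁻¹) * ((dot3 (K x) (K x))⁻¹) * (K x 0) * (K x 0) * (pd 0 f x) * (hA 0 2) + (2) * ((dot3 (K x) (K x))⁻¹) * ((dot3 (K x) (K x))⁻¹) * (K x 0) * (K x 2) * (pd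 2 f x) * (hA 0 2) + (1) * ((dot3 (K x) (K x))⁻¹) * ((dot3 (K x) (K x))⁻¹) * (K x 1) * (K x 1) * (pd 0 f x) * (hA 0 2) + (1) * ((dot3 (K x) (K x))⁻¹) * ((dot3 (K x) (K x))⁻¹) * (K x 2) * (K x 2) * (pd 0 f x) * (hA 0 2) + (-1/2) * ((dot3 (K x) (K x))⁻¹) * ((dot3 (K x) (K x))⁻¹) * (K x 0) * (K x 0) * (pd 2 f x) * (hA 1 1) + (1/2) * ((dot3 (K x) (K x))⁻¹) * ((dot3 (K x) (K x))⁻¹) * (K x 1) * (K x 1) * (pd 2 f x) * (hA 1 1) + (-1/2) * ((dot3 (K x) (K x))⁻¹) * ((dot3 (K x) (K x))⁻¹) * (K x 2) * (K x 2) * (pd 2 f x) * (hA 1 1) + (1) * ((dot3 (K x) (K x))⁻¹) * ((dot3 (K x) (K x))⁻¹) * (K x 0) * (K x 0) * (pd 1 f x) * (hA 1 2) + (1) * ((dot3 (K x) (K x))⁻¹) * ((dot3 (K x) (K x))⁻¹) * (K x 1) * (K x 1) * (pd 1 f x) * (hA 1 2) + (2) * ((dot3 (K x) (K x))⁻¹)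 * ((dot3 (K x) (K x))⁻¹) * (K x 1) * (K x 2) * (pd 2 f x) * (hA 1 2) + (1) * ((dot3 (K x) (K x))⁻¹) * ((dot3 (K x) (K x))⁻¹) * (K x 2) * (K x 2) * (pd 1 f x) * (hA 1 2) + (1/2) * ((dot3 (K x) (K x))⁻¹) * ((dot3 (K x) (K x))⁻¹) * (K x 0) * (K x 0) * (pd 2 f x) * (hA 2 2) + (1/2) * ((dot3 (K x) (K x))⁻¹) * ((dot3 (K x) (K x))⁻¹) * (K x 1) * (K x 1) * (pd 2 f x) * (hA 2 2) + (3/2) * ((dot3 (K x) (K x))⁻¹) * ((dot3 (K x) (K x))⁻¹) * (K x 2) * (K x 2) * (pd 2 f x) * (hA 2 2) + (-1) * ((dot3 (K x) (K x))⁻¹) * ((dot3 (K x) (K x))⁻¹) * (K x 0) * (K x 0) * (K x 0) * (hB 0 2) + (-1) * ((dot3 (K x) (K x))⁻¹) * ((dot3 (K x) (K x))⁻¹) * (K x 0) * (K x 1) * (K x 1) * (hB 0 2) + (-1) * ((dot3 (K x) (K x))⁻¹) * ((dot3 (K x) (K x))⁻¹) * (K x 0) * (K x 2) * (K x 2) *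 (hB 0 2) + (-1) * ((dot3 (K x) (K x))⁻¹) * ((dot3 (K x) (K x))⁻¹) * (K x 0) * (K x 0) * (K x 1) * (hB 1 2) + (-1) * ((dot3 (K x) (K x))⁻¹) * ((dot3 (K x) (K x))⁻¹) * (K x 1) * (K x 1) * (K x 1) * (hB 1 2) + (-1) * ((dot3 (K x) (K x))⁻¹) * ((dot3 (K x) (K x))⁻¹) * (K x 1) * (K x 2) * (K x 2) * (hB 1 2) + (-1) * ((dot3 (K x) (K x))⁻¹) * ((dot3 (K x) (K x))⁻¹) * (K x 0) * (K x 0) * (hC 2) + (-1) * ((dot3 (K x) (K x))⁻¹) * ((dot3 (K x) (K x))⁻¹) * (K x 1) * (K x 1) * (hC 2) + (-1) * ((dot3 (K x) (K x))⁻¹) * ((dot3 (K x) (K x))⁻¹) * (K x 2) * (K x 2) * (hC 2) + (1 * (pd 0 (fun y => K y 0) x) * (pd 2 f x) * ((dot3 (K x) (K x))⁻¹) + (-1) * (pd 0 (fun y => K y 2) x) * (pd 0 f x) * ((dot3 (K x) (K x))⁻¹) + 1 * (pd 1 (fun y => K y 1) x) * (pd 2 f x) * ((dot3 (K x) (K x))⁻¹)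 + (-1) * (pd 1 (fun y => K y 2) x) * (pd 1 f x) * ((dot3 (K x) (K x))⁻¹) + 1 * (pd 0 (fun y => pd 2 f y) x) * (K x 0) * ((dot3 (K x) (K x))⁻¹) + 1 * (pd 1 (fun y => pd 2 f y) x) * (K x 1) * ((dot3 (K x) (K x))⁻¹) + 1 * (pd 2 (fun y => pd 2 f y) x) * (K x 2) * ((dot3 (K x) (K x))⁻¹)) * hw
  · funext m
    fin_cases m
    · show pd 1 (fun y => g y * K y 2) x - pd 2 (fun y => g y * K y 1) x
        = -((dot3 (K x) (K x))⁻¹ * (K x 1 * pd 2 (fun y => dot3 (K y) (K y) * g y) x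
            - K x 2 * pd 1 (fun y => dot3 (K y) (K y) * g y) x))
          + phiK K x * g x * K x 0
      rw [hgK 1 2, hgK 2 1, hs 1, hs 2, hphi]
      linear_combination (-1) * ((dot3 (K x) (K x))⁻¹) * (g x) * (K x 0) * (K x 2) * (hA 0 1) + (1) * ((dot3 (K x) (K x))⁻¹) * (g x) * (K x 0) * (K x 1) * (hA 0 2) + (-1) * ((dot3 (K x) (K x))⁻¹) * (g x) * (K x 1) * (K x 2) * (hA 1 1) + (1) * ((dot3 (K x) (K x))⁻¹) * (g x) * (K x 1) * (K x 1) * (hA 1 2) + (-1) * ((dot3 (K x) (K x))⁻¹) * (g x) * (K x 2) * (K x 2) * (hA 1 2) + (1) * ((dot3 (K x) (K x))⁻¹) * (g x) * (K x 1) * (K x 2) * (hA 2 2) + ((-1) * (g x) * (pd 1 (fun y => K y 2) x) + 1 * (g x) * (pd 2 (fun y => K y 1) x) + 1 * (K x 1) * (pd 2 g x) + (-1) * (K x 2) * (pd 1 g x)) * hw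
    · show pd 2 (fun y => g y * K y 0) x - pd 0 (fun y => g y * K y 2) x
        = -((dot3 (K x) (K x))⁻¹ * (K x 2 * pd 0 (fun y => dot3 (K y) (K y) * g y) x
            - K x 0 * pd 2 (fun y => dot3 (K y) (K y) * g y) x))
          + phiK K x * g x * K x 1
      rw [hgK 2 0, hgK 0 2, hs 0, hs 2, hphi]
      linear_combination (1) * ((dot3 (K x) (K x))⁻¹) * (g x) * (K x 0) * (K x 2) * (hA 0 0) + (1) * ((dot3 (K x) (K x))⁻¹) * (g x) * (K x 1) * (K x 2) * (hA 0 1) + (-1) * ((dot3 (K x) (K x))⁻¹) * (g x) * (K x 0) * (K x 0) * (hA 0 2) + (1) * ((dot3 (K x) (K x))⁻¹) * (g x) * (K x 2) * (K x 2) * (hA 0 2) + (-1) * ((dot3 (K x) (K x))⁻¹) * (g x) * (K x 0) * (K x 1) * (hA 1 2) + (-1) * ((dot3 (K x) (K x))⁻¹) * (g x) * (K x 0) * (K x 2) * (hA 2 2) + (1 * (g x) * (pd 0 (fun y => K y 2) x) + (-1) * (g x) * (pd 2 (fun y => K y 0) x) + (-1) * (K x 0) * (pd 2 g x) + 1 *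 (K x 2) * (pd 0 g x)) * hw
    · show pd 0 (fun y => g y * K y 1) x - pd 1 (fun y => g y * K y 0) x
        = -((dot3 (K x) (K x))⁻¹ * (K x 0 * pd 1 (fun y => dot3 (K y) (K y) * g y) x
            - K x 1 * pd 0 (fun y => dot3 (K y) (K y) * g y) x))
          + phiK K x * g x * K x 2
      rw [hgK 0 1, hgK 1 0, hs 0, hs 1, hphi]
      linear_combination (-1) * ((dot3 (K x) (K x))⁻¹) * (g x) * (K x 0) * (K x 1) * (hA 0 0) + (1) * ((dot3 (K x) (K x))⁻¹) * (g x) * (K x 0) * (K x 0) * (hA 0 1) + (-1) * ((dot3 (K x) (K x))⁻¹) * (g x) * (K x 1) * (K x 1) * (hA 0 1) + (-1) * ((dot3 (K x) (K x))⁻¹) * (g x) * (K x 1) * (K x 2) * (hA 0 2) + (1) * ((dot3 (K x) (K x))⁻¹) * (g x) * (K x 0) * (K x 1) * (hA 1 1) + (1) * ((dot3 (K x) (K x))⁻¹) * (g x) * (K x 0) * (K x 2) * (hA 1 2) + ((-1) * (g x) * (pd 0 (fun y => K y 1) x) + 1 * (g x) * (pd 1 (fun y => K y 0) x) + 1 *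 (K x 0) * (pd 1 g x) + (-1) * (K x 1) * (pd 0 g x)) * hw
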